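/- Let Ω ⊂ ℂ be a bounded open set and let w, v : closure(Ω) → ℝ be continuous functions that are twice continuously differentiable on Ω, with v ≥ 0 on closure(Ω). Suppose k, g, k̲, ḡ : closure(Ω) → ℝ are continuous functions satisfying k ≥ k̲ > 0 and |g| ≤ ḡ pointwise, and suppose that Δw − k²·w = g and Δv − k̲²·v = −ḡ hold on Ω. If |w| ≤ v at every point of the topological boundary ∂Ω, then |w| ≤ v at every point of closure(Ω). -/

import Mathlib

open Filter Topology


/-- Directional derivative of `f : ℂ → E` at `z` in the direction `v ∈ ℂ`. -/
noncomputable def dirDeriv {E : Type*} [NormedAddCommGroup E] [NormedSpace ℝ E]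
    (v : ℂ) (f : ℂ → E) (z : ℂ) : E :=
  deriv (fun t : ℝ => f (z + t • v)) 0

/-- The flat Laplacian `Δf = ∂²f/∂x² + ∂²f/∂y²` of a function on `ℂ ≅ ℝ²`
(applied componentwise when the target is `ℂ`). -/
noncomputable def flatLaplacian {E : Type*} [NormedAddCommGroup E] [NormedSpace ℝ E]
    (f : ℂ → E) (z : ℂ) : E :=
  dirDeriv 1 (dirDeriv 1 f) z + dirDeriv Complex.I (dirDeriv Complex.I f) z

lemma hasDerivAt_line (z e : ℂ) (t : ℝ) : HasDerivAt (fun s : ℝ => z + s • e) e t := by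
  simpa using ((hasDerivAt_id t).smul_const e).const_add z

lemma dirDeriv_eq_fderiv {f : ℂ → ℝ} {z : ℂ} (hf : DifferentiableAt ℝ f z) (e : ℂ) :
    dirDeriv e f z = fderiv ℝ f z e := by
  have hc : HasDerivAt (fun t : ℝ => z + t • e) e 0 := hasDerivAt_line z e 0
  have hf' : HasFDerivAt f (fderiv ℝ f z) (z + (0:ℝ) • e) := by simpa using hf.hasFDerivAt
  have h := hf'.comp_hasDerivAt 0 hc
  simpa [dirDeriv, Function.comp_def] using h.deriv

lemma secondTest {φ φ' : ℝ → ℝ} {c : ℝ}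
    (hφ : ∀ᶠ t in 𝓝 (0:ℝ), HasDerivAt φ (φ' t) t)
    (h2 : HasDerivAt φ' c 0)
    (hmax : IsLocalMax φ 0) : c ≤ 0 := by
  by_contra hc
  push_neg at hc
  have hφ'0 : φ' 0 = 0 := by
    have h0 : HasDerivAt φ (φ' 0) 0 := hφ.self_of_nhds
    have hd := hmax.deriv_eq_zero
    rwa [h0.deriv] at hd
  have hslope : ∀ᶠ t in 𝓝[≠] (0:ℝ), 0 < slope φ' 0 t := by
    have ht := hasDerivAt_iff_tendsto_slope.mp h2
    exact ht.eventually (eventually_gt_nhds hc)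
  rw [eventually_nhdsWithin_iff] at hslope
  have hall := (hφ.and hslope).and (hmax : ∀ᶠ t in 𝓝 (0:ℝ), φ t ≤ φ 0)
  rw [Metric.eventually_nhds_iff] at hall
  obtain ⟨ε, hε, hP⟩ := hall
  set b := ε / 2 with hb
  have hbε : ∀ t : ℝ, t ∈ Set.Icc 0 b → dist t 0 < ε := by
    intro t ht
    rw [Real.dist_eq, sub_zero, abs_of_nonneg ht.1]
    calc t ≤ b := ht.2
    _ < ε := by simp [hb]; linarith
  have hb0 : (0:ℝ) < b := by positivity
  obtain ⟨ξ, hξ, hξeq⟩ := exists_hasDerivAt_eq_slope φ φ' hb0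
    (fun t ht => ((hP (hbε t ht)).1.1).continuousAt.continuousWithinAt)
    (fun t ht => (hP (hbε t (Set.mem_Icc_of_Ioo ht))).1.1)
  have hmem : ξ ∈ Set.Icc 0 b := Set.mem_Icc_of_Ioo hξ
  have hsl : 0 < slope φ' 0 ξ := (hP (hbε ξ hmem)).1.2 (ne_of_gt hξ.1)
  rw [slope_def_field, hφ'0, sub_zero, sub_zero] at hsl
  have hφ'ξ : 0 < φ' ξ := by
    have := mul_pos hsl hξ.1
    rwa [div_mul_cancel₀ _ (ne_of_gt hξ.1)] at this
  have hle : φ b ≤ φ 0 := (hP (hbε b ⟨le_of_lt hb0, le_refl b⟩)).2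
  rw [hξeq, sub_zero] at hφ'ξ
  have : 0 < φ b - φ 0 := by
    have := mul_pos hφ'ξ hb0
    rwa [div_mul_cancel₀ _ (ne_of_gt hb0)] at this
  linarith

lemma diffAt_of_C2 {f : ℂ → ℝ} {Ω : Set ℂ} (hΩ : IsOpen Ω) (hf : ContDiffOn ℝ 2 f Ω)
    {z : ℂ} (hz : z ∈ Ω) : DifferentiableAt ℝ f z :=
  ((hf.differentiableOn (by norm_num)) z hz).differentiableAt (hΩ.mem_nhds hz)

lemma diffAt_fderiv_of_C2 {f : ℂ → ℝ} {Ω : Set ℂ} (hΩ : IsOpen Ω) (hf : ContDiffOn ℝ 2 f Ω)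
    {z : ℂ} (hz : z ∈ Ω) : DifferentiableAt ℝ (fderiv ℝ f) z := by
  have h2 : ContDiffAt ℝ 2 f z := hf.contDiffAt (hΩ.mem_nhds hz)
  exact (h2.fderiv_right (m := 1) (by norm_num)).differentiableAt one_ne_zero

lemma diffAt_fderiv_apply {f : ℂ → ℝ} {Ω : Set ℂ} (hΩ : IsOpen Ω) (hf : ContDiffOn ℝ 2 f Ω)
    {z : ℂ} (hz : z ∈ Ω) (e : ℂ) : DifferentiableAt ℝ (fun y => fderiv ℝ f y e) z :=
  (ContinuousLinearMap.apply ℝ ℝ e).differentiableAt.comp z (diffAt_fderiv_of_C2 hΩ hf hz)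

lemma fderiv_comp_apply {g : ℂ → ℝ} {z : ℂ} (hg : DifferentiableAt ℝ g z) (e : ℂ) :
    HasDerivAt (fun t : ℝ => g (z + t • e)) (fderiv ℝ g z e) 0 := by
  have hg' : HasFDerivAt g (fderiv ℝ g z) (z + (0:ℝ) • e) := by simpa using hg.hasFDerivAt
  exact hg'.comp_hasDerivAt 0 (hasDerivAt_line z e 0)

lemma dirDeriv_dirDeriv {f : ℂ → ℝ} {Ω : Set ℂ} (hΩ : IsOpen Ω) (hf : ContDiffOn ℝ 2 f Ω)
    {z : ℂ} (hz : z ∈ Ω) (e : ℂ) :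
    dirDeriv e (dirDeriv e f) z = fderiv ℝ (fun y => fderiv ℝ f y e) z e := by
  have hmem : ∀ᶠ t : ℝ in 𝓝 0, z + t • e ∈ Ω := by
    have hc : Continuous (fun t : ℝ => z + t • e) := by continuity
    have : (fun t : ℝ => z + t • e) 0 ∈ Ω := by simpa using hz
    exact hc.continuousAt.eventually_mem (hΩ.mem_nhds this)
  have heq : (fun t : ℝ => dirDeriv e f (z + t • e)) =ᶠ[𝓝 0]
      (fun t : ℝ => fderiv ℝ f (z + t • e) e) := by
    filter_upwards [hmem] with t ht
    exact dirDeriv_eq_fderiv (diffAt_of_C2 hΩ hf ht) e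
  have h2 := fderiv_comp_apply (diffAt_fderiv_apply hΩ hf hz e) e
  calc dirDeriv e (dirDeriv e f) z = deriv (fun t : ℝ => fderiv ℝ f (z + t • e) e) 0 :=
        heq.deriv_eq
    _ = fderiv ℝ (fun y => fderiv ℝ f y e) z e := h2.deriv

lemma aux0 (Ω : Set ℂ) (hΩopen : IsOpen Ω) (hΩbdd : Bornology.IsBounded Ω)
    (w v k g kbar gbar : ℂ → ℝ)
    (hw_cont : ContinuousOn w (closure Ω)) (hw_C2 : ContDiffOn ℝ 2 w Ω)
    (hv_cont : ContinuousOn v (closure Ω)) (hv_C2 : ContDiffOn ℝ 2 v Ω)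
    (hv_nonneg : ∀ z ∈ closure Ω, 0 ≤ v z)
    (hk_ge : ∀ z ∈ closure Ω, kbar z ≤ k z)
    (hkbar_pos : ∀ z ∈ closure Ω, 0 < kbar z)
    (hg_ge : ∀ z ∈ closure Ω, -(gbar z) ≤ g z)
    (hw_eq : ∀ z ∈ Ω, flatLaplacian w z - (k z) ^ 2 * w z = g z)
    (hv_eq : ∀ z ∈ Ω, flatLaplacian v z - (kbar z) ^ 2 * v z = -(gbar z))
    (hbdry : ∀ z ∈ frontier Ω, w z ≤ v z) :
    ∀ z ∈ closure Ω, w z ≤ v z := by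
  by_contra hcon
  push_neg at hcon
  obtain ⟨z₁, hz₁, hz₁'⟩ := hcon
  set u : ℂ → ℝ := fun z => w z - v z with hu
  have hK : IsCompact (closure Ω) := hΩbdd.isCompact_closure
  have hucont : ContinuousOn u (closure Ω) := hw_cont.sub hv_cont
  obtain ⟨z₀, hz₀K, hz₀max⟩ := hK.exists_isMaxOn ⟨z₁, hz₁⟩ hucont
  have hu₀pos : 0 < u z₀ := lt_of_lt_of_le (by simp only [hu]; linarith) (hz₀max hz₁)
  have hz₀Ω : z₀ ∈ Ω := by
    by_contra h
    have hfr : z₀ ∈ frontier Ω := by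
      rw [hΩopen.frontier_eq]; exact ⟨hz₀K, h⟩
    have := hbdry z₀ hfr
    simp only [hu] at hu₀pos; linarith
  -- differentiability facts
  have hΩnhd : Ω ∈ 𝓝 z₀ := hΩopen.mem_nhds hz₀Ω
  have hmemΩ : ∀ y ∈ Ω, DifferentiableAt ℝ u y := fun y hy =>
    (diffAt_of_C2 hΩopen hw_C2 hy).sub (diffAt_of_C2 hΩopen hv_C2 hy)
  -- the second-derivative quantities
  set F : (ℂ → ℝ) → ℂ → ℝ := fun f e => fderiv ℝ (fun y => fderiv ℝ f y e) z₀ e with hF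
  -- linearity: eventually fderiv u y e = fderiv w y e - fderiv v y e
  have hev : ∀ e : ℂ, (fun y => fderiv ℝ u y e) =ᶠ[𝓝 z₀]
      (fun y => fderiv ℝ w y e - fderiv ℝ v y e) := by
    intro e
    filter_upwards [hΩnhd] with y hy
    rw [hu]
    rw [fderiv_fun_sub (diffAt_of_C2 hΩopen hw_C2 hy) (diffAt_of_C2 hΩopen hv_C2 hy)]
    rfl
  have hdiffgu : ∀ e : ℂ, DifferentiableAt ℝ (fun y => fderiv ℝ u y e) z₀ := by
    intro e
    exact DifferentiableAt.congr_of_eventuallyEq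
      ((diffAt_fderiv_apply hΩopen hw_C2 hz₀Ω e).sub (diffAt_fderiv_apply hΩopen hv_C2 hz₀Ω e))
      (hev e)
  have hFu : ∀ e : ℂ, F u e = F w e - F v e := by
    intro e
    rw [hF]
    simp only
    rw [(hev e).fderiv_eq,
      fderiv_fun_sub (diffAt_fderiv_apply hΩopen hw_C2 hz₀Ω e) (diffAt_fderiv_apply hΩopen hv_C2 hz₀Ω e)]
    rfl
  -- flatLaplacian in terms of F
  have hlapw : flatLaplacian w z₀ = F w 1 + F w Complex.I := by
    rw [flatLaplacian, dirDeriv_dirDeriv hΩopen hw_C2 hz₀Ω,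
      dirDeriv_dirDeriv hΩopen hw_C2 hz₀Ω]
  have hlapv : flatLaplacian v z₀ = F v 1 + F v Complex.I := by
    rw [flatLaplacian, dirDeriv_dirDeriv hΩopen hv_C2 hz₀Ω,
      dirDeriv_dirDeriv hΩopen hv_C2 hz₀Ω]
  -- second derivative test along each direction
  have hFle : ∀ e : ℂ, F u e ≤ 0 := by
    intro e
    have hmem : ∀ᶠ t : ℝ in 𝓝 0, z₀ + t • e ∈ Ω := by
      have hc : Continuous (fun t : ℝ => z₀ + t • e) := by continuity
      have h0 : (fun t : ℝ => z₀ + t • e) 0 ∈ Ω := by simpa using hz₀Ω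
      exact hc.continuousAt.eventually_mem (hΩopen.mem_nhds h0)
    apply secondTest (φ := fun t : ℝ => u (z₀ + t • e))
        (φ' := fun t : ℝ => fderiv ℝ u (z₀ + t • e) e)
    · filter_upwards [hmem] with t ht
      have hd := hmemΩ _ ht
      have hd' : HasFDerivAt u (fderiv ℝ u (z₀ + t • e)) (z₀ + t • e) := hd.hasFDerivAt
      exact hd'.comp_hasDerivAt t (hasDerivAt_line z₀ e t)
    · have h2 := fderiv_comp_apply (hdiffgu e) e
      exact h2
    · show IsLocalMax _ 0
      filter_upwards [hmem] with t ht
      have := hz₀max (subset_closure ht)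
      simpa using this
  -- now arithmetic
  have heqw := hw_eq z₀ hz₀Ω
  have heqv := hv_eq z₀ hz₀Ω
  have hsum : F u 1 + F u Complex.I ≤ 0 := by
    have := hFle 1; have := hFle Complex.I; linarith
  have hwv : F u 1 + F u Complex.I = flatLaplacian w z₀ - flatLaplacian v z₀ := by
    rw [hFu 1, hFu Complex.I, hlapw, hlapv]; ring
  have hvz : 0 ≤ v z₀ := hv_nonneg z₀ hz₀K
  have hwz : 0 < w z₀ := by simp only [hu] at hu₀pos; linarith
  have hkb := hkbar_pos z₀ hz₀K
  have hkk := hk_ge z₀ hz₀K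
  have hgg := hg_ge z₀ hz₀K
  have hk2 : kbar z₀ ^ 2 ≤ k z₀ ^ 2 := by nlinarith
  have hupos : 0 < w z₀ - v z₀ := by simp only [hu] at hu₀pos; linarith
  have h1 : 0 ≤ (k z₀ ^ 2 - kbar z₀ ^ 2) * w z₀ :=
    mul_nonneg (by linarith) (le_of_lt hwz)
  have h2 : 0 < kbar z₀ ^ 2 * (w z₀ - v z₀) := mul_pos (pow_pos hkb 2) hupos
  have hpos : 0 < flatLaplacian w z₀ - flatLaplacian v z₀ := by nlinarith
  rw [hwv] at hsum
  linarith

lemma dirDeriv_neg (e : ℂ) (f : ℂ → ℝ) :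
    dirDeriv e (fun z => -f z) = fun z => -(dirDeriv e f z) := by
  funext z
  simp only [dirDeriv]
  exact deriv.neg

lemma flatLaplacian_neg (f : ℂ → ℝ) (z : ℂ) :
    flatLaplacian (fun y => -f y) z = -flatLaplacian f z := by
  simp only [flatLaplacian, dirDeriv_neg]
  ring


/-- maximum principle, Lemma 5.2: Let `Ω ⊂ ℂ` be a bounded open set,
`w, v` continuous on `closure Ω`, `C²` on `Ω`, `v ≥ 0`, with `Δw − k²w = g`,
`Δv − k̲²v = −ḡ` on `Ω`, `k ≥ k̲ > 0`, `|g| ≤ ḡ`. If `|w| ≤ v` on `∂Ω`,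
then `|w| ≤ v` on `closure Ω`. -/
theorem statement0
    (Ω : Set ℂ) (hΩopen : IsOpen Ω) (hΩbdd : Bornology.IsBounded Ω)
    (w v k g kbar gbar : ℂ → ℝ)
    (hw_cont : ContinuousOn w (closure Ω)) (hw_C2 : ContDiffOn ℝ 2 w Ω)
    (hv_cont : ContinuousOn v (closure Ω)) (hv_C2 : ContDiffOn ℝ 2 v Ω)
    (hv_nonneg : ∀ z ∈ closure Ω, 0 ≤ v z)
    (hk_cont : ContinuousOn k (closure Ω)) (hg_cont : ContinuousOn g (closure Ω))
    (hkbar_cont : ContinuousOn kbar (closure Ω)) (hgbar_cont : ContinuousOn gbar (closure Ω))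
    (hk_ge : ∀ z ∈ closure Ω, kbar z ≤ k z)
    (hkbar_pos : ∀ z ∈ closure Ω, 0 < kbar z)
    (hg_le : ∀ z ∈ closure Ω, |g z| ≤ gbar z)
    (hw_eq : ∀ z ∈ Ω, flatLaplacian w z - (k z) ^ 2 * w z = g z)
    (hv_eq : ∀ z ∈ Ω, flatLaplacian v z - (kbar z) ^ 2 * v z = -(gbar z))
    (hbdry : ∀ z ∈ frontier Ω, |w z| ≤ v z) :
    ∀ z ∈ closure Ω, |w z| ≤ v z := by
  have hA : ∀ z ∈ closure Ω, w z ≤ v z := by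
    apply aux0 Ω hΩopen hΩbdd w v k g kbar gbar hw_cont hw_C2 hv_cont hv_C2 hv_nonneg
      hk_ge hkbar_pos _ hw_eq hv_eq
    · intro z hz
      exact le_trans (le_abs_self (w z)) (hbdry z hz)
    · intro z hz
      have := (abs_le.mp (hg_le z hz)).1
      linarith
  have hB : ∀ z ∈ closure Ω, -w z ≤ v z := by
    apply aux0 Ω hΩopen hΩbdd (fun z => -w z) v k (fun z => -g z) kbar gbar
      hw_cont.neg hw_C2.neg hv_cont hv_C2 hv_nonneg hk_ge hkbar_pos _ _ hv_eq
    · intro z hz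
      have h := neg_abs_le (w z)
      have := hbdry z hz
      linarith
    · intro z hz
      have := (abs_le.mp (hg_le z hz)).2
      linarith
    · intro z hz
      have h := hw_eq z hz
      have hn := flatLaplacian_neg w z
      rw [hn]
      linarith
  intro z hz
  exact abs_le.mpr ⟨by have := hB z hz; linarith, hA z hz⟩
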